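/- Let D be a finite DAG with vertices partitioned into sources S, internal vertices I, and sinks T, and let X ⊆ I be a set of pairwise false twins (all vertices in X share the same in-neighborhood and the same out-neighborhood). Then there exists a minimum-cost total elimination sequence in which the vertices of X are eliminated consecutively. -/

import Mathlib

set_option linter.unusedSectionVars false
set_option maxHeartbeats 2000000


variable {V : Type*} [DecidableEq V] [Fintype V]

/-- In-neighborhood of `v` in the edge set `E`. -/
def inN (E : Finset (V × V)) (v : V) : Finset V :=
  (E.filter fun p => p.2 = v).image Prod.fst

/-- Out-neighborhood of `v` in the edge set `E`. -/
def outN (E : Finset (V × V)) (v : V) : Finset V :=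
  (E.filter fun p => p.1 = v).image Prod.snd

/-- Elimination of vertex `v`: delete `v` and add an edge from every in-neighbor
to every out-neighbor of `v` (if not already present). -/
def elimv (E : Finset (V × V)) (v : V) : Finset (V × V) :=
  (E ∪ (inN E v) ×ˢ (outN E v)).filter fun p => p.1 ≠ v ∧ p.2 ≠ v

/-- Eliminate a sequence of vertices, in order. -/
def elimSeq (E : Finset (V × V)) (σ : List V) : Finset (V × V) :=
  σ.foldl elimv E

/-- Markowitz degree of `v`: in-degree times out-degree. -/
def mark (E : Finset (V × V)) (v : V) : ℕ :=
  (inN E v).card * (outN E v).card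

/-- Cost of an elimination sequence: sum of the Markowitz degrees at the
time of each elimination. -/
def cost (E : Finset (V × V)) : List V → ℕ
  | [] => 0
  | v :: σ => mark E v + cost (elimv E v) σ

/-- The directed graph with edge set `E` is acyclic. -/
def Acyclic (E : Finset (V × V)) : Prop :=
  ∀ v : V, ¬ Relation.TransGen (fun a b => (a, b) ∈ E) v v

/-- `E` is an acyclic digraph whose vertices are partitioned into sources `S`
(no in-edges), internal vertices `I`, and sinks `T` (no out-edges). -/
def IsDAGPartition (E : Finset (V × V)) (S I T : Finset V) : Prop :=
  Acyclic E ∧ Disjoint S I ∧ Disjoint S T ∧ Disjoint I T ∧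
    S ∪ I ∪ T = Finset.univ ∧ (∀ s ∈ S, inN E s = ∅) ∧ (∀ t ∈ T, outN E t = ∅)

/-- There is a directed path from `i` to `j` all of whose internal vertices
lie in `X` (the single-edge path has no internal vertices). -/
def PathThrough (E : Finset (V × V)) (X : Finset V) (i j : V) : Prop :=
  ∃ l : List V, (∀ v ∈ l, v ∈ X) ∧ List.Chain' (fun a b => (a, b) ∈ E) (i :: (l ++ [j]))

-- basic membership lemmas
lemma mem_inN {E : Finset (V × V)} {a v : V} : a ∈ inN E v ↔ (a, v) ∈ E := by
  constructor
  · rintro h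
    simp only [inN, Finset.mem_image, Finset.mem_filter] at h
    obtain ⟨⟨x, y⟩, ⟨hE, hy⟩, hx⟩ := h
    simp at hy hx; subst hy; subst hx; exact hE
  · intro h
    simp only [inN, Finset.mem_image, Finset.mem_filter]
    exact ⟨(a, v), ⟨h, rfl⟩, rfl⟩

lemma mem_outN {E : Finset (V × V)} {b v : V} : b ∈ outN E v ↔ (v, b) ∈ E := by
  constructor
  · rintro h
    simp only [outN, Finset.mem_image, Finset.mem_filter] at h
    obtain ⟨⟨x, y⟩, ⟨hE, hy⟩, hx⟩ := h
    simp at hy hx; subst hy; subst hx; exact hE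
  · intro h
    simp only [outN, Finset.mem_image, Finset.mem_filter]
    exact ⟨(v, b), ⟨h, rfl⟩, rfl⟩

lemma mem_elimv {E : Finset (V × V)} {v a b : V} :
    (a, b) ∈ elimv E v ↔ ((a, b) ∈ E ∨ ((a, v) ∈ E ∧ (v, b) ∈ E)) ∧ a ≠ v ∧ b ≠ v := by
  simp only [elimv, Finset.mem_filter, Finset.mem_union, Finset.mem_product, mem_inN, mem_outN]

lemma elimv_comm (E : Finset (V × V)) (x y : V) :
    elimv (elimv E x) y = elimv (elimv E y) x := by
  rcases eq_or_ne x y with rfl | hxy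
  · rfl
  ext ⟨a, b⟩
  simp only [mem_elimv]
  by_cases h1 : (a, b) ∈ E <;> by_cases h2 : (a, x) ∈ E <;> by_cases h3 : (x, b) ∈ E <;>
    by_cases h4 : (a, y) ∈ E <;> by_cases h5 : (y, b) ∈ E <;> by_cases h6 : (x, y) ∈ E <;>
    by_cases h7 : (y, x) ∈ E <;> simp_all <;> tauto

-- acyclicity
lemma transGen_of_elimv {E : Finset (V × V)} {w a b : V}
    (h : Relation.TransGen (fun x y => (x, y) ∈ elimv E w) a b) :
    Relation.TransGen (fun x y => (x, y) ∈ E) a b := by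
  have step : ∀ x y : V, (x, y) ∈ elimv E w → Relation.TransGen (fun s t => (s, t) ∈ E) x y := by
    intro x y hxy
    rw [mem_elimv] at hxy
    rcases hxy.1 with h' | ⟨h1, h2⟩
    · exact Relation.TransGen.single h'
    · exact Relation.TransGen.tail (Relation.TransGen.single h1) h2
  induction h with
  | single h' => exact step _ _ h'
  | tail _ h' ih => exact ih.trans (step _ _ h')

lemma acyclic_elimv {E : Finset (V × V)} (h : Acyclic E) (w : V) : Acyclic (elimv E w) :=
  fun v hv => h v (transGen_of_elimv hv)

lemma acyclic_elimSeq {E : Finset (V × V)} (h : Acyclic E) (σ : List V) :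
    Acyclic (elimSeq E σ) := by
  induction σ generalizing E with
  | nil => exact h
  | cons w t ih => exact ih (acyclic_elimv h w)

lemma no_loop {E : Finset (V × V)} (h : Acyclic E) (a : V) : (a, a) ∉ E :=
  fun ha => h a (Relation.TransGen.single ha)

lemma no_two_cycle {E : Finset (V × V)} (h : Acyclic E) {a b : V}
    (h1 : (a, b) ∈ E) (h2 : (b, a) ∈ E) : False :=
  h a (Relation.TransGen.tail (Relation.TransGen.single h1) h2)

-- twins
def Twins (G : Finset (V × V)) (u v : V) : Prop :=
  inN G u = inN G v ∧ outN G u = outN G v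

lemma Twins.in_iff {G : Finset (V × V)} {u v : V} (h : Twins G u v) (a : V) :
    (a, u) ∈ G ↔ (a, v) ∈ G := by
  rw [← mem_inN, ← mem_inN, h.1]

lemma Twins.out_iff {G : Finset (V × V)} {u v : V} (h : Twins G u v) (b : V) :
    (u, b) ∈ G ↔ (v, b) ∈ G := by
  rw [← mem_outN, ← mem_outN, h.2]

lemma Twins.no_uv {G : Finset (V × V)} (hac : Acyclic G) {u v : V} (h : Twins G u v) :
    (u, v) ∉ G := fun huv => no_loop hac v ((h.out_iff v).mp huv)

lemma Twins.no_vu {G : Finset (V × V)} (hac : Acyclic G) {u v : V} (h : Twins G u v) :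
    (v, u) ∉ G := fun huv => no_loop hac v ((h.in_iff v).mp huv)

lemma twins_elimv {G : Finset (V × V)} {u v w : V} (h : Twins G u v)
    (hwu : w ≠ u) (hwv : w ≠ v) : Twins (elimv G w) u v := by
  constructor
  · ext a
    rw [mem_inN, mem_inN, mem_elimv, mem_elimv, h.in_iff a,
      h.in_iff w]
    constructor
    · rintro ⟨h1, h2, _⟩; exact ⟨h1, h2, Ne.symm hwv⟩
    · rintro ⟨h1, h2, _⟩; exact ⟨h1, h2, Ne.symm hwu⟩
  · ext b
    rw [mem_outN, mem_outN, mem_elimv, mem_elimv, h.out_iff b, h.out_iff w]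
    constructor
    · rintro ⟨h1, _, h3⟩; exact ⟨h1, Ne.symm hwv, h3⟩
    · rintro ⟨h1, _, h3⟩; exact ⟨h1, Ne.symm hwu, h3⟩

lemma twins_elimSeq {G : Finset (V × V)} {u v : V} (h : Twins G u v) :
    ∀ a : List V, u ∉ a → v ∉ a → Twins (elimSeq G a) u v := by
  intro a
  induction a generalizing G with
  | nil => intro _ _; exact h
  | cons w t ih =>
    intro hu hv
    exact ih (twins_elimv h (fun e => hu (e ▸ (List.mem_cons_self (a := w) (l := t))))
      (fun e => hv (e ▸ (List.mem_cons_self (a := w) (l := t)))))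
      (fun e => hu (List.mem_cons_of_mem w e)) (fun e => hv (List.mem_cons_of_mem w e))

-- F2: eliminating a twin does not change the other twin's neighborhoods
lemma inN_elimv_twin {G : Finset (V × V)} (hac : Acyclic G) {u v : V}
    (h : Twins G u v) (huv : u ≠ v) : inN (elimv G u) v = inN G v := by
  ext a
  rw [mem_inN, mem_inN, mem_elimv]
  constructor
  · rintro ⟨h1 | ⟨h1, h2⟩, _, _⟩
    · exact h1
    · exact absurd h2 (h.no_uv hac)
  · intro h1
    refine ⟨Or.inl h1, ?_, Ne.symm huv⟩
    rintro rfl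
    exact no_loop hac v ((h.out_iff v).mp h1)

lemma outN_elimv_twin {G : Finset (V × V)} (hac : Acyclic G) {u v : V}
    (h : Twins G u v) (huv : u ≠ v) : outN (elimv G u) v = outN G v := by
  ext b
  rw [mem_outN, mem_outN, mem_elimv]
  constructor
  · rintro ⟨h1 | ⟨h1, h2⟩, _, _⟩
    · exact h1
    · exact absurd h1 (h.no_vu hac)
  · intro h1
    refine ⟨Or.inl h1, Ne.symm huv, ?_⟩
    rintro rfl
    exact no_loop hac v ((h.in_iff v).mp h1)

lemma mark_elimv_twin {G : Finset (V × V)} (hac : Acyclic G) {u v : V}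
    (h : Twins G u v) (huv : u ≠ v) : mark (elimv G u) v = mark G u := by
  rw [mark, inN_elimv_twin hac h huv, outN_elimv_twin hac h huv, mark, h.1, h.2]

lemma inN_elimv2_twin {G : Finset (V × V)} (hac : Acyclic G) {u v w : V}
    (ht : Twins G u v) (huv : u ≠ v) (hwv : w ≠ v) :
    inN (elimv (elimv G u) v) w = (inN (elimv G u) w).erase v := by
  have hac1 : Acyclic (elimv G u) := acyclic_elimv hac u
  ext a
  rw [Finset.mem_erase, mem_inN, mem_inN, mem_elimv]
  constructor
  · rintro ⟨h1 | ⟨h1, h2⟩, ha, _⟩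
    · exact ⟨ha, h1⟩
    · -- a → v → w in elimv G u; reroute through the complete bipartite fill
      refine ⟨ha, ?_⟩
      have haA : (a, u) ∈ G := by
        have : a ∈ inN (elimv G u) v := mem_inN.mpr h1
        rw [inN_elimv_twin hac ht huv] at this
        exact (ht.in_iff a).mpr (mem_inN.mp this)
      have hvw : (v, w) ∈ G := by
        rw [mem_elimv] at h2
        rcases h2.1 with h' | ⟨h', _⟩
        · exact h'
        · exact absurd h' (ht.no_vu hac)
      have huw : (u, w) ∈ G := (ht.out_iff w).mpr hvw
      have hau : a ≠ u := by rintro rfl; exact no_loop hac _ haA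
      have hwu : w ≠ u := by rintro rfl; exact no_loop hac _ huw
      exact mem_elimv.mpr ⟨Or.inr ⟨haA, huw⟩, hau, hwu⟩
  · rintro ⟨ha, h1⟩
    exact ⟨Or.inl h1, ha, hwv⟩

lemma outN_elimv2_twin {G : Finset (V × V)} (hac : Acyclic G) {u v w : V}
    (ht : Twins G u v) (huv : u ≠ v) (hwv : w ≠ v) :
    outN (elimv (elimv G u) v) w = (outN (elimv G u) w).erase v := by
  have hac1 : Acyclic (elimv G u) := acyclic_elimv hac u
  ext b
  rw [Finset.mem_erase, mem_outN, mem_outN, mem_elimv]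
  constructor
  · rintro ⟨h1 | ⟨h1, h2⟩, _, hb⟩
    · exact ⟨hb, h1⟩
    · refine ⟨hb, ?_⟩
      have hbB : (u, b) ∈ G := by
        have : b ∈ outN (elimv G u) v := mem_outN.mpr h2
        rw [outN_elimv_twin hac ht huv] at this
        exact (ht.out_iff b).mpr (mem_outN.mp this)
      have hwv' : (w, v) ∈ G := by
        rw [mem_elimv] at h1
        rcases h1.1 with h' | ⟨_, h'⟩
        · exact h'
        · exact absurd h' (ht.no_uv hac)
      have hwu : (w, u) ∈ G := (ht.in_iff w).mpr hwv'
      have hbu : b ≠ u := by rintro rfl; exact no_loop hac _ hbB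
      have hwu'' : w ≠ u := by rintro rfl; exact no_loop hac _ hwu
      exact mem_elimv.mpr ⟨Or.inr ⟨hwu, hbB⟩, hwu'', hbu⟩
  · rintro ⟨hb, h1⟩
    exact ⟨Or.inl h1, hwv, hb⟩

lemma key_ineq {G : Finset (V × V)} (hac : Acyclic G) {u v w : V}
    (ht : Twins G u v) (huv : u ≠ v) (hwu : w ≠ u) (hwv : w ≠ v) :
    mark G w + mark (elimv (elimv G u) v) w ≤ 2 * mark (elimv G u) w := by
  have hac1 : Acyclic (elimv G u) := acyclic_elimv hac u
  have hI2 := inN_elimv2_twin hac ht huv hwv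
  have hO2 := outN_elimv2_twin hac ht huv hwv
  by_cases huw : (u, w) ∈ G <;> by_cases hwu' : (w, u) ∈ G
  · exact absurd hwu' (fun h => no_two_cycle hac huw h)
  · -- u ∈ inN G w
    have hO1 : outN (elimv G u) w = outN G w := by
      ext b
      rw [mem_outN, mem_outN, mem_elimv]
      constructor
      · rintro ⟨h1 | ⟨h1, _⟩, _, _⟩
        · exact h1
        · exact absurd h1 hwu'
      · intro h1
        have hbu : b ≠ u := by rintro rfl; exact hwu' h1
        exact ⟨Or.inl h1, hwu, hbu⟩
    have hvI1 : v ∈ inN (elimv G u) w := by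
      have hvw : (v, w) ∈ G := (ht.out_iff w).mp huw
      exact mem_inN.mpr (mem_elimv.mpr ⟨Or.inl hvw, Ne.symm huv, hwu⟩)
    have hvO1 : v ∉ outN (elimv G u) w := by
      intro hb
      exact no_two_cycle hac1 (mem_inN.mp hvI1) (mem_outN.mp hb)
    have hsub : inN G w ⊆ insert u (inN (elimv G u) w) := by
      intro a ha
      rcases eq_or_ne a u with rfl | hau
      · exact Finset.mem_insert_self _ _
      · exact Finset.mem_insert_of_mem (mem_inN.mpr
          (mem_elimv.mpr ⟨Or.inl (mem_inN.mp ha), hau, hwu⟩))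
    have hcard0 : (inN G w).card ≤ (inN (elimv G u) w).card + 1 :=
      le_trans (Finset.card_le_card hsub) (Finset.card_insert_le _ _)
    have hcard2 : (inN (elimv (elimv G u) v) w).card = (inN (elimv G u) w).card - 1 := by
      rw [hI2, Finset.card_erase_of_mem hvI1]
    have h1le : 1 ≤ (inN (elimv G u) w).card := Finset.card_pos.mpr ⟨v, hvI1⟩
    have hO2' : outN (elimv (elimv G u) v) w = outN G w := by
      rw [hO2, Finset.erase_eq_of_notMem hvO1, hO1]
    rw [mark, mark, mark, hcard2, hO2', hO1]
    obtain ⟨k, hk⟩ := Nat.exists_eq_add_of_le h1le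
    rw [hk]
    have hc : (inN G w).card ≤ k + 2 := by omega
    have : 1 + k - 1 = k := by omega
    rw [this]
    nlinarith [Nat.zero_le ((outN G w).card)]
  · -- u ∈ outN G w (mirror)
    have hI1 : inN (elimv G u) w = inN G w := by
      ext a
      rw [mem_inN, mem_inN, mem_elimv]
      constructor
      · rintro ⟨h1 | ⟨_, h1⟩, _, _⟩
        · exact h1
        · exact absurd h1 huw
      · intro h1
        have hau : a ≠ u := by rintro rfl; exact huw h1
        exact ⟨Or.inl h1, hau, hwu⟩
    have hvO1 : v ∈ outN (elimv G u) w := by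
      have hwv' : (w, v) ∈ G := (ht.in_iff w).mp hwu'
      exact mem_outN.mpr (mem_elimv.mpr ⟨Or.inl hwv', hwu, Ne.symm huv⟩)
    have hvI1 : v ∉ inN (elimv G u) w := by
      intro hb
      exact no_two_cycle hac1 (mem_inN.mp hb) (mem_outN.mp hvO1)
    have hsub : outN G w ⊆ insert u (outN (elimv G u) w) := by
      intro b hb
      rcases eq_or_ne b u with rfl | hbu
      · exact Finset.mem_insert_self _ _
      · exact Finset.mem_insert_of_mem (mem_outN.mpr
          (mem_elimv.mpr ⟨Or.inl (mem_outN.mp hb), hwu, hbu⟩))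
    have hcard0 : (outN G w).card ≤ (outN (elimv G u) w).card + 1 :=
      le_trans (Finset.card_le_card hsub) (Finset.card_insert_le _ _)
    have hcard2 : (outN (elimv (elimv G u) v) w).card = (outN (elimv G u) w).card - 1 := by
      rw [hO2, Finset.card_erase_of_mem hvO1]
    have h1le : 1 ≤ (outN (elimv G u) w).card := Finset.card_pos.mpr ⟨v, hvO1⟩
    have hI2' : inN (elimv (elimv G u) v) w = inN G w := by
      rw [hI2, Finset.erase_eq_of_notMem hvI1, hI1]
    rw [mark, mark, mark, hcard2, hI2', hI1]
    obtain ⟨k, hk⟩ := Nat.exists_eq_add_of_le h1le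
    rw [hk]
    have hc : (outN G w).card ≤ k + 2 := by omega
    have : 1 + k - 1 = k := by omega
    rw [this]
    nlinarith [Nat.zero_le ((inN G w).card)]
  · -- u adjacent to w in neither direction
    have hI1 : inN (elimv G u) w = inN G w := by
      ext a
      rw [mem_inN, mem_inN, mem_elimv]
      constructor
      · rintro ⟨h1 | ⟨_, h1⟩, _, _⟩
        · exact h1
        · exact absurd h1 huw
      · intro h1
        have hau : a ≠ u := by rintro rfl; exact huw h1
        exact ⟨Or.inl h1, hau, hwu⟩
    have hO1 : outN (elimv G u) w = outN G w := by
      ext b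
      rw [mem_outN, mem_outN, mem_elimv]
      constructor
      · rintro ⟨h1 | ⟨h1, _⟩, _, _⟩
        · exact h1
        · exact absurd h1 hwu'
      · intro h1
        have hbu : b ≠ u := by rintro rfl; exact hwu' h1
        exact ⟨Or.inl h1, hwu, hbu⟩
    have hm2 : mark (elimv (elimv G u) v) w ≤ mark (elimv G u) w := by
      rw [mark, mark, hI2, hO2]
      exact Nat.mul_le_mul (Finset.card_le_card (Finset.erase_subset _ _))
        (Finset.card_le_card (Finset.erase_subset _ _))
    have hm0 : mark G w = mark (elimv G u) w := by rw [mark, mark, hI1, hO1]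
    omega

lemma elimSeq_nil (E : Finset (V × V)) : elimSeq E [] = E := rfl

lemma elimSeq_cons (E : Finset (V × V)) (w : V) (t : List V) :
    elimSeq E (w :: t) = elimSeq (elimv E w) t := rfl

lemma cost_append (E : Finset (V × V)) (s t : List V) :
    cost E (s ++ t) = cost E s + cost (elimSeq E s) t := by
  induction s generalizing E with
  | nil => simp [cost, elimSeq_nil]
  | cons w s ih =>
    simp only [List.cons_append, cost, ih, elimSeq_cons, List.append_eq]
    omega

instance : RightCommutative (elimv (V := V)) := ⟨fun E x y => elimv_comm E x y⟩

lemma elimSeq_perm (E : Finset (V × V)) {s t : List V} (h : s.Perm t) :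
    elimSeq E s = elimSeq E t :=
  List.Perm.foldl_eq h E

-- The exchange inequality
lemma exchange {G : Finset (V × V)} (hac : Acyclic G) {u v : V}
    (ht : Twins G u v) (huv : u ≠ v) :
    ∀ m : List V, u ∉ m → v ∉ m → ∀ r : List V,
      cost G (u :: v :: (m ++ r)) + cost G (m ++ u :: v :: r) ≤
        2 * cost G (u :: (m ++ v :: r)) := by
  intro m
  induction m generalizing G with
  | nil =>
    intro _ _ r
    simp only [List.nil_append]
    omega
  | cons w m ih =>
    intro hum hvm r
    have hwu : w ≠ u := by rintro rfl; exact hum (List.mem_cons_self)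
    have hwv : w ≠ v := by rintro rfl; exact hvm (List.mem_cons_self)
    have hum' : u ∉ m := fun h => hum (List.mem_cons_of_mem _ h)
    have hvm' : v ∉ m := fun h => hvm (List.mem_cons_of_mem _ h)
    have hacw : Acyclic (elimv G w) := acyclic_elimv hac w
    have htw : Twins (elimv G w) u v := twins_elimv ht hwu hwv
    have IH := ih hacw htw hum' hvm' r
    -- abbreviations
    have hcomm1 : elimv (elimv G w) u = elimv (elimv G u) w := elimv_comm G w u
    have hcomm2 : elimv (elimv (elimv G w) u) v = elimv (elimv (elimv G u) v) w := by
      rw [hcomm1, elimv_comm]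
    -- expand costs
    have e1 : cost G (u :: v :: ((w :: m) ++ r)) =
        mark G u + mark (elimv G u) v + mark (elimv (elimv G u) v) w +
          cost (elimv (elimv (elimv G u) v) w) (m ++ r) := by
      simp only [List.cons_append, cost, List.append_eq]; omega
    have e2 : cost G ((w :: m) ++ u :: v :: r) =
        mark G w + cost (elimv G w) (m ++ u :: v :: r) := by
      simp only [List.cons_append, cost, List.append_eq]
    have e3 : cost G (u :: ((w :: m) ++ v :: r)) =
        mark G u + mark (elimv G u) w + cost (elimv (elimv G u) w) (m ++ v :: r) := by
      simp only [List.cons_append, cost, List.append_eq]; omega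
    have e4 : cost (elimv G w) (u :: v :: (m ++ r)) =
        mark (elimv G w) u + mark (elimv (elimv G w) u) v +
          cost (elimv (elimv (elimv G u) v) w) (m ++ r) := by
      simp only [cost, hcomm2, List.append_eq]; omega
    have e5 : cost (elimv G w) (u :: (m ++ v :: r)) =
        mark (elimv G w) u + cost (elimv (elimv G u) w) (m ++ v :: r) := by
      simp only [cost, hcomm1, List.append_eq]
    have f1 : mark (elimv (elimv G w) u) v = mark (elimv G w) u :=
      mark_elimv_twin hacw htw huv
    have f2 : mark (elimv G u) v = mark G u := mark_elimv_twin hac ht huv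
    have f3 : mark G w + mark (elimv (elimv G u) v) w ≤ 2 * mark (elimv G u) w :=
      key_ineq hac ht huv hwu hwv
    rw [e1, e2, e3]
    rw [e4, e5] at IH
    omega

def muX (X : Finset V) : List V → ℕ
  | [] => 0
  | _ :: t => t.countP (fun x => decide (x ∈ X)) + muX X t

lemma muX_append (X : Finset V) (s t : List V) :
    muX X (s ++ t) = muX X s + s.length * t.countP (fun x => decide (x ∈ X)) + muX X t := by
  induction s with
  | nil => simp [muX]
  | cons w s ih =>
    simp only [List.cons_append, muX, ih, List.countP_append, List.length_cons,
      List.append_eq]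
    ring

lemma muX_swap (X : Finset V) (u v : V) (m r : List V)
    (hm : ∀ w ∈ m, w ∉ X) (hv : v ∈ X) :
    muX X (u :: v :: (m ++ r)) + m.length = muX X (u :: (m ++ v :: r)) := by
  have hm0 : m.countP (fun x => decide (x ∈ X)) = 0 := by
    rw [List.countP_eq_zero]
    intro a ha
    simpa using hm a ha
  have hcv : ∀ l : List V, (v :: l).countP (fun x => decide (x ∈ X)) =
      1 + l.countP (fun x => decide (x ∈ X)) := by
    intro l
    rw [List.countP_cons]
    simp [hv]
    omega
  simp only [muX, muX_append, List.countP_append, hcv, hm0, muX]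
  ring

lemma muX_perm (X : Finset V) {s t : List V} (h : s.Perm t) :
    s.countP (fun x => decide (x ∈ X)) = t.countP (fun x => decide (x ∈ X)) :=
  h.countP_eq _

-- Decomposition: either the X-elements are consecutive, or there are two
-- X-elements separated by a nonempty gap of non-X-elements.
lemma decompose (X : Finset V) :
    ∀ σ : List V, σ.Nodup →
      (∃ a ρ r, σ = a ++ ρ ++ r ∧ ∀ x, x ∈ ρ ↔ x ∈ σ ∧ x ∈ X) ∨
      (∃ a u m v r, σ = a ++ u :: (m ++ v :: r) ∧ u ∈ X ∧ v ∈ X ∧ m ≠ [] ∧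
        ∀ w ∈ m, w ∉ X) := by
  intro σ
  induction σ with
  | nil =>
    intro _
    exact Or.inl ⟨[], [], [], rfl, by simp⟩
  | cons w t ih =>
    intro hnd
    have hwt : w ∉ t := (List.nodup_cons.mp hnd).1
    have hnt : t.Nodup := (List.nodup_cons.mp hnd).2
    rcases ih hnt with ⟨a, ρ, r, heq, hiff⟩ | ⟨a, u, m, v, r, heq, huX, hvX, hmne, hmX⟩
    · by_cases hwX : w ∈ X
      · rcases a with _ | ⟨b, a'⟩
        · -- a = []
          refine Or.inl ⟨[], w :: ρ, r, by simp [heq], ?_⟩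
          intro x
          simp only [List.mem_cons]
          constructor
          · rintro (rfl | hx)
            · exact ⟨Or.inl rfl, hwX⟩
            · obtain ⟨h1, h2⟩ := (hiff x).mp hx
              exact ⟨Or.inr h1, h2⟩
          · rintro ⟨rfl | h1, h2⟩
            · exact Or.inl rfl
            · exact Or.inr ((hiff x).mpr ⟨h1, h2⟩)
        · -- a = b :: a' nonempty
          have haX : ∀ x ∈ b :: a', x ∉ X := by
            intro x hx hxX
            have hxρ : x ∈ ρ := (hiff x).mpr ⟨by
              rw [heq]; simp only [List.mem_append, List.mem_cons] at hx ⊢; tauto, hxX⟩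
            have : (b :: a').Disjoint (ρ ++ r) := by
              apply List.disjoint_of_nodup_append
              rw [← List.append_assoc, ← heq]
              exact hnt
            exact this hx (List.mem_append_left r hxρ)
          rcases ρ with _ | ⟨p, ρ'⟩
          · -- ρ = []: t has no X elements at all
            refine Or.inl ⟨[], [w], (b :: a') ++ r, ?_, ?_⟩
            · simp only [heq]; simp
            · intro x
              simp only [List.mem_cons, List.not_mem_nil, or_false]
              constructor
              · rintro rfl; exact ⟨Or.inl rfl, hwX⟩
              · rintro ⟨rfl | h1, h2⟩
                · rfl
                · exact absurd ((hiff x).mpr ⟨h1, h2⟩) (List.not_mem_nil)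
          · -- ρ = p :: ρ'
            have hpX : p ∈ X := ((hiff p).mp (List.mem_cons_self)).2
            refine Or.inr ⟨[], w, b :: a', p, ρ' ++ r, ?_, hwX, hpX, List.cons_ne_nil _ _, haX⟩
            simp only [heq]
            simp
      · -- w ∉ X
        refine Or.inl ⟨w :: a, ρ, r, by simp [heq], ?_⟩
        intro x
        rw [hiff x]
        simp only [List.mem_cons]
        constructor
        · rintro ⟨h1, h2⟩; exact ⟨Or.inr h1, h2⟩
        · rintro ⟨rfl | h1, h2⟩
          · exact absurd h2 hwX
          · exact ⟨h1, h2⟩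
    · exact Or.inr ⟨w :: a, u, m, v, r, by simp [heq], huX, hvX, hmne, hmX⟩

lemma perm_toFinset {l1 l2 : List V} (h : l1.Perm l2) : l1.toFinset = l2.toFinset :=
  List.toFinset_eq_iff_perm_dedup.mpr h.dedup


/-- if `X ⊆ I` is a set of pairwise false twins, then some
minimum-cost total elimination sequence eliminates the vertices of `X`
consecutively. -/
theorem false_twins_consecutive (E : Finset (V × V)) (S I T : Finset V)
    (hD : IsDAGPartition E S I T) (X : Finset V) (hX : X ⊆ I)
    (htwin : ∀ u ∈ X, ∀ v ∈ X, inN E u = inN E v ∧ outN E u = outN E v) :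
    ∃ σ : List V, σ.Nodup ∧ σ.toFinset = I ∧
      (∀ τ : List V, τ.Nodup → τ.toFinset = I → cost E σ ≤ cost E τ) ∧
      ∃ σ₁ ρ σ₂ : List V, σ = σ₁ ++ ρ ++ σ₂ ∧ ρ.toFinset = X := by
  have hac : Acyclic E := hD.1
  have hIl : I.toList.Nodup := I.nodup_toList
  have hPne : (I.toList.permutations.toFinset : Finset (List V)).Nonempty :=
    ⟨I.toList, by rw [List.mem_toFinset, List.mem_permutations]⟩
  obtain ⟨σ₀, hσ₀P, hmin⟩ := Finset.exists_min_image _ (cost E) hPne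
  rw [List.mem_toFinset, List.mem_permutations] at hσ₀P
  have hvalid : ∀ τ : List V, τ.Nodup → τ.toFinset = I → τ.Perm I.toList := by
    intro τ h1 h2
    have h3 : τ.toFinset = I.toList.toFinset := by rw [h2, Finset.toList_toFinset]
    have h4 := List.toFinset_eq_iff_perm_dedup.mp h3
    rwa [h1.dedup, hIl.dedup] at h4
  have hmin' : ∀ τ : List V, τ.Nodup → τ.toFinset = I → cost E σ₀ ≤ cost E τ := by
    intro τ h1 h2
    exact hmin τ (by rw [List.mem_toFinset, List.mem_permutations]; exact hvalid τ h1 h2)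
  have hσ₀nd : σ₀.Nodup := hσ₀P.nodup_iff.mpr hIl
  have hσ₀F : σ₀.toFinset = I := by rw [perm_toFinset hσ₀P, Finset.toList_toFinset]
  clear hmin hPne hvalid
  suffices key : ∀ n : ℕ, ∀ σ : List V, σ.Nodup → σ.toFinset = I →
      (∀ τ : List V, τ.Nodup → τ.toFinset = I → cost E σ ≤ cost E τ) → muX X σ ≤ n →
      ∃ σ' : List V, σ'.Nodup ∧ σ'.toFinset = I ∧
        (∀ τ : List V, τ.Nodup → τ.toFinset = I → cost E σ' ≤ cost E τ) ∧
        ∃ σ₁ ρ σ₂ : List V, σ' = σ₁ ++ ρ ++ σ₂ ∧ ρ.toFinset = X by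
    exact key (muX X σ₀) σ₀ hσ₀nd hσ₀F hmin' le_rfl
  intro n
  induction n using Nat.strong_induction_on with
  | _ n ih =>
  intro σ h1 h2 h3 h4
  rcases decompose X σ h1 with ⟨a, ρ, r, heq, hiff⟩ | ⟨a, u, m, v, r, heq, huX, hvX, hmne, hmX⟩
  · refine ⟨σ, h1, h2, h3, a, ρ, r, heq, ?_⟩
    ext x
    rw [List.mem_toFinset, hiff x]
    constructor
    · rintro ⟨_, hx⟩; exact hx
    · intro hx
      refine ⟨?_, hx⟩
      have hxI : x ∈ I := hX hx
      rw [← h2, List.mem_toFinset] at hxI; exact hxI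
  · subst heq
    -- extract nodup facts
    rw [List.nodup_append] at h1
    obtain ⟨hand, hcons, hdisj⟩ := h1
    rw [List.nodup_cons] at hcons
    obtain ⟨humvr, hmvr⟩ := hcons
    have hum : u ∉ m := fun h => humvr (List.mem_append_left _ h)
    have huv : u ≠ v := fun h =>
      humvr (List.mem_append_right _ (h ▸ List.mem_cons_self))
    have hvm : v ∉ m := by
      intro h
      have := List.disjoint_of_nodup_append hmvr
      exact this h (List.mem_cons_self)
    have hua : u ∉ a := fun h => hdisj u h u List.mem_cons_self rfl
    have hva : v ∉ a := fun h =>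
      hdisj v h v (List.mem_cons_of_mem _ (List.mem_append_right _ List.mem_cons_self)) rfl
    -- restore full nodup
    have h1' : (a ++ u :: (m ++ v :: r)).Nodup := by
      rw [List.nodup_append, List.nodup_cons]
      exact ⟨hand, ⟨humvr, hmvr⟩, hdisj⟩
    -- twins
    have htE : Twins E u v := ⟨(htwin u huX v hvX).1, (htwin u huX v hvX).2⟩
    have hacG : Acyclic (elimSeq E a) := acyclic_elimSeq hac a
    have htG : Twins (elimSeq E a) u v := twins_elimSeq htE a hua hva
    have hexch := exchange hacG htG huv m hum hvm r
    -- the two rearrangements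
    have hpermIn' : (u :: (m ++ v :: r)).Perm (u :: v :: (m ++ r)) :=
      List.Perm.cons u List.perm_middle
    have hpermIn'' : (u :: (m ++ v :: r)).Perm (m ++ u :: v :: r) :=
      List.perm_middle.symm
    have hperm' : (a ++ u :: (m ++ v :: r)).Perm (a ++ u :: v :: (m ++ r)) :=
      List.Perm.append_left a hpermIn'
    have hperm'' : (a ++ u :: (m ++ v :: r)).Perm (a ++ (m ++ u :: v :: r)) :=
      List.Perm.append_left a hpermIn''
    have hnd' : (a ++ u :: v :: (m ++ r)).Nodup := hperm'.nodup_iff.mp h1'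
    have hnd'' : (a ++ (m ++ u :: v :: r)).Nodup := hperm''.nodup_iff.mp h1'
    have hF' : (a ++ u :: v :: (m ++ r)).toFinset = I := by
      rw [← perm_toFinset hperm']; exact h2
    have hF'' : (a ++ (m ++ u :: v :: r)).toFinset = I := by
      rw [← perm_toFinset hperm'']; exact h2
    have hc : cost E (a ++ u :: (m ++ v :: r)) =
        cost E a + cost (elimSeq E a) (u :: (m ++ v :: r)) := cost_append E a _
    have hc' : cost E (a ++ u :: v :: (m ++ r)) =
        cost E a + cost (elimSeq E a) (u :: v :: (m ++ r)) := cost_append E a _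
    have hc'' : cost E (a ++ (m ++ u :: v :: r)) =
        cost E a + cost (elimSeq E a) (m ++ u :: v :: r) := cost_append E a _
    have hle' := h3 _ hnd' hF'
    have hle'' := h3 _ hnd'' hF''
    have heqcost : cost E (a ++ u :: v :: (m ++ r)) = cost E (a ++ u :: (m ++ v :: r)) := by
      omega
    -- measure decreases
    have hmlen : 1 ≤ m.length := List.length_pos_iff.mpr hmne
    have hswap : muX X (u :: v :: (m ++ r)) + m.length = muX X (u :: (m ++ v :: r)) :=
      muX_swap X u v m r hmX hvX
    have hcp : (u :: v :: (m ++ r)).countP (fun x => decide (x ∈ X)) =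
        (u :: (m ++ v :: r)).countP (fun x => decide (x ∈ X)) :=
      muX_perm X hpermIn'.symm
    have hmu : muX X (a ++ u :: v :: (m ++ r)) + m.length = muX X (a ++ u :: (m ++ v :: r)) := by
      rw [muX_append, muX_append, hcp]
      omega
    have hn1 : 1 ≤ n := by omega
    have hmu' : muX X (a ++ u :: v :: (m ++ r)) ≤ n - 1 := by omega
    have h3' : ∀ τ : List V, τ.Nodup → τ.toFinset = I →
        cost E (a ++ u :: v :: (m ++ r)) ≤ cost E τ := by
      intro τ ht1 ht2
      rw [heqcost]
      exact h3 τ ht1 ht2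
    exact ih (n - 1) (by omega) _ hnd' hF' h3' hmu'
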